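/- arXiv:1810.00418 — 2 statements merged into one kernel-verified Lean document; each statement's English description precedes it below -/
import Mathlib

section
/- Let A ⊆ ℕ × ∂B be a finite set with s ≥ 1 for every (s,y) ∈ A, and let σ be a permutation of A. If σ(s,y) ∈ S(s,y) for every (s,y) ∈ A, then σ is the identity permutation. -/
open Finset

/-- The `i`-th standard unit vector `e_i` in `ℤ^(d+1)`. -/
def unitVec (d : ℕ) (i : Fin (d + 1)) : Fin (d + 1) → ℤ := Pi.single i 1

/-- The ℓ¹-norm `‖v‖₁ = ∑ i, |v i|` on `ℤ^(d+1)`. -/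
def norm1 {d : ℕ} (v : Fin (d + 1) → ℤ) : ℤ := ∑ i, |v i|

/-- `P t x z` represents the `t`-step transition probability `P(Z^x_t = z)` of a
time-homogeneous Markov chain on `ℤ^(d+1)` which at each step moves by `± e_i`,
with all `2(d+1)` one-step probabilities strictly positive and summing to `1`. -/
structure IsRandomWalk (d : ℕ)
    (P : ℕ → (Fin (d + 1) → ℤ) → (Fin (d + 1) → ℤ) → ℝ) : Prop where
  nonneg : ∀ t x z, 0 ≤ P t x z
  init : ∀ x z, P 0 x z = if z = x then 1 else 0
  step : ∀ t x z, P (t + 1) x z =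
      ∑ i, P 1 x (x + unitVec d i) * P t (x + unitVec d i) z
        + ∑ i, P 1 x (x - unitVec d i) * P t (x - unitVec d i) z
  sum_one : ∀ x, (∑ i, P 1 x (x + unitVec d i)) + (∑ i, P 1 x (x - unitVec d i)) = 1
  pos_add : ∀ x i, 0 < P 1 x (x + unitVec d i)
  pos_sub : ∀ x i, 0 < P 1 x (x - unitVec d i)

/-- The expectation `E[h(Z^x_t)]` (the law of `Z^x_t` has finite support). -/
noncomputable def expect {d : ℕ} (P : ℕ → (Fin (d + 1) → ℤ) → (Fin (d + 1) → ℤ) → ℝ)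
    (t : ℕ) (x : Fin (d + 1) → ℤ) (h : (Fin (d + 1) → ℤ) → ℝ) : ℝ :=
  ∑ᶠ z, h z * P t x z

/-- The finite set `S(t,x) = {(s,y) ∈ ℕ × ∂B : 1 ≤ s ≤ t, ‖y − x‖₁ ≤ t − s,
and t − s − ‖y − x‖₁ is even}`. -/
noncomputable def Sset (d t : ℕ) (x : Fin (d + 1) → ℤ) : Finset (ℕ × (Fin (d + 1) → ℤ)) :=
  ((Finset.Icc 1 t) ×ˢ (Fintype.piFinset fun i => Finset.Icc (x i - t) (x i + t))).filter
    (fun p => p.2 (Fin.last d) = 0 ∧ norm1 (p.2 - x) ≤ (t : ℤ) - p.1 ∧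
      Even ((t : ℤ) - p.1 - norm1 (p.2 - x)))

/-- The matrix `W^+_{t,x}`, with entries `(W^+)_{(s,y),(u,z)} = P(Z^y_s = z + u e_d)`. -/
noncomputable def Wplus {d : ℕ} (P : ℕ → (Fin (d + 1) → ℤ) → (Fin (d + 1) → ℤ) → ℝ)
    (t : ℕ) (x : Fin (d + 1) → ℤ) :
    Matrix {p // p ∈ Sset d t x} {p // p ∈ Sset d t x} ℝ :=
  fun p q => P p.1.1 p.1.2 (q.1.2 + Pi.single (Fin.last d) (q.1.1 : ℤ))

/-- The matrix `W^-_{t,x}`, with entries `(W^-)_{(s,y),(u,z)} = P(Z^y_s = z - u e_d)`. -/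
noncomputable def Wminus {d : ℕ} (P : ℕ → (Fin (d + 1) → ℤ) → (Fin (d + 1) → ℤ) → ℝ)
    (t : ℕ) (x : Fin (d + 1) → ℤ) :
    Matrix {p // p ∈ Sset d t x} {p // p ∈ Sset d t x} ℝ :=
  fun p q => P p.1.1 p.1.2 (q.1.2 - Pi.single (Fin.last d) (q.1.1 : ℤ))

/-- `N_{t,x} = (W^-_{t,x})⁻¹ W^+_{t,x}`. -/
noncomputable def Nmat {d : ℕ} (P : ℕ → (Fin (d + 1) → ℤ) → (Fin (d + 1) → ℤ) → ℝ)
    (t : ℕ) (x : Fin (d + 1) → ℤ) :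
    Matrix {p // p ∈ Sset d t x} {p // p ∈ Sset d t x} ℝ :=
  (Wminus P t x)⁻¹ * Wplus P t x

/-- The extended transform `N f`, vanishing outside `{w : w_d < 0}`, defined at a point
`w = x − t e_d` (with `x ∈ ∂B`, `t ≥ 1`) as the `(t,x)`-component of `N_{t,x}` applied to
the vector `(f(z + u e_d))_{(u,z) ∈ S(t,x)}`.  (Note that `(t,x) ∈ S(t,x)` always holds
in this situation, so the guard below is satisfied exactly when `w_d < 0`.) -/
noncomputable def Ntrans {d : ℕ} (P : ℕ → (Fin (d + 1) → ℤ) → (Fin (d + 1) → ℤ) → ℝ)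
    (f : (Fin (d + 1) → ℤ) → ℝ) : (Fin (d + 1) → ℤ) → ℝ := fun w =>
  if hm : ((-(w (Fin.last d))).toNat, Function.update w (Fin.last d) 0) ∈
      Sset d (-(w (Fin.last d))).toNat (Function.update w (Fin.last d) 0) then
    (Nmat P (-(w (Fin.last d))).toNat (Function.update w (Fin.last d) 0)).mulVec
      (fun p => f (p.1.2 + Pi.single (Fin.last d) (p.1.1 : ℤ)))
      ⟨((-(w (Fin.last d))).toNat, Function.update w (Fin.last d) 0), hm⟩
  else 0

/-- if a permutation `σ` of a finite set `A ⊆ ℕ × ∂B` (with `s ≥ 1` on `A`)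
satisfies `σ(s,y) ∈ S(s,y)` for all `(s,y) ∈ A`, then `σ` is the identity. -/
theorem stmt_4 (d : ℕ) (A : Finset (ℕ × (Fin (d + 1) → ℤ)))
    (hA : ∀ p ∈ A, 1 ≤ p.1 ∧ p.2 (Fin.last d) = 0)
    (σ : Equiv.Perm {p // p ∈ A})
    (hσ : ∀ p : {p // p ∈ A}, (σ p).1 ∈ Sset d p.1.1 p.1.2) :
    σ = 1 := by
  -- From membership in Sset, the first coordinate weakly decreases.
  have hle : ∀ p : {p // p ∈ A}, (σ p).1.1 ≤ p.1.1 := by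
    intro p
    have h := hσ p
    simp only [Sset, Finset.mem_filter, Finset.mem_product, Finset.mem_Icc] at h
    exact h.1.1.2
  -- Sum of first coordinates is preserved, so equality everywhere.
  have hsum : ∑ p : {p // p ∈ A}, (σ p).1.1 = ∑ p : {p // p ∈ A}, p.1.1 :=
    Equiv.sum_comp σ (fun p => p.1.1)
  have heq : ∀ p : {p // p ∈ A}, (σ p).1.1 = p.1.1 := by
    intro p
    have := (Finset.sum_eq_sum_iff_of_le (fun i _ => hle i)).mp hsum p (Finset.mem_univ p)
    exact this
  -- Now show σ p = p for each p.
  ext p : 2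
  have h := hσ p
  simp only [Sset, Finset.mem_filter, Finset.mem_product, Finset.mem_Icc] at h
  obtain ⟨-, -, hnorm, -⟩ := h
  rw [heq p] at hnorm
  have hzero : norm1 ((σ p).1.2 - p.1.2) = 0 := by
    have hnn : 0 ≤ norm1 ((σ p).1.2 - p.1.2) :=
      Finset.sum_nonneg fun i _ => abs_nonneg _
    omega
  have hvec : (σ p).1.2 = p.1.2 := by
    have := (Finset.sum_eq_zero_iff_of_nonneg
      (fun i (_ : i ∈ Finset.univ) => abs_nonneg (((σ p).1.2 - p.1.2) i))).mp hzero
    funext i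
    have hi := this i (Finset.mem_univ i)
    have : ((σ p).1.2 - p.1.2) i = 0 := abs_eq_zero.mp hi
    simpa [sub_eq_zero] using this
  exact Prod.ext (heq p) hvec
end

section
/- Let A ⊆ ℕ × ∂B be a finite set with s ≥ 1 for every (s,y) ∈ A, and let σ be a permutation of A, writing σ(s,y) = (σ₁(s,y), σ₂(s,y)). Then the following four conditions are equivalent: (i) ∏_{(s,y)∈A} P(Z^y_s = σ₂(s,y) + σ₁(s,y) e_d) > 0; (ii) ∏_{(s,y)∈A} P(Z^y_s = σ₂(s,y) − σ₁(s,y) e_d) > 0; (iii) σ(s,y) ∈ S(s,y) for all (s,y) ∈ A; (iv) σ is the identity permutation of A. -/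
open Finset

set_option linter.unusedVariables false

lemma norm1_zero {d : ℕ} : norm1 (0 : Fin (d+1) → ℤ) = 0 := by unfold norm1; simp

lemma norm1_nonneg {d : ℕ} (v : Fin (d+1) → ℤ) : 0 ≤ norm1 v :=
  Finset.sum_nonneg fun i _ => abs_nonneg _

lemma norm1_eq_zero {d : ℕ} {v : Fin (d+1) → ℤ} (h : norm1 v = 0) : v = 0 := by
  unfold norm1 at h
  rw [Finset.sum_eq_zero_iff_of_nonneg (fun i _ => abs_nonneg _)] at h
  funext i
  simpa using h i (Finset.mem_univ i)

lemma abs_le_norm1 {d : ℕ} (v : Fin (d+1) → ℤ) (i : Fin (d+1)) : |v i| ≤ norm1 v :=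
  Finset.single_le_sum (fun j _ => abs_nonneg (v j)) (Finset.mem_univ i)

lemma norm1_update {d : ℕ} (v : Fin (d+1) → ℤ) (i : Fin (d+1)) (a : ℤ) :
    norm1 (Function.update v i a) = norm1 v - |v i| + |a| := by
  have h : ∀ j, |Function.update v i a j| = |v j| + (if j = i then |a| - |v i| else 0) := by
    intro j
    by_cases h : j = i
    · subst h; simp
    · simp [Function.update_apply, h]
  unfold norm1
  simp_rw [h, Finset.sum_add_distrib, Finset.sum_ite_eq' Finset.univ i]
  simp
  ring

lemma vec_add_single {d : ℕ} (v : Fin (d+1) → ℤ) (i : Fin (d+1)) (c : ℤ) :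
    v + Pi.single i c = Function.update v i (v i + c) := by
  funext j
  by_cases h : j = i
  · subst h; simp
  · simp [Pi.single_apply, Function.update_apply, h]

lemma vec_sub_single {d : ℕ} (v : Fin (d+1) → ℤ) (i : Fin (d+1)) (c : ℤ) :
    v - Pi.single i c = Function.update v i (v i - c) := by
  funext j
  by_cases h : j = i
  · subst h; simp
  · simp [Pi.single_apply, Function.update_apply, h]

lemma sum_pos_iff' {α : Type*} [Fintype α] {f : α → ℝ} (hf : ∀ i, 0 ≤ f i) :
    0 < ∑ i, f i ↔ ∃ i, 0 < f i := by
  constructor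
  · intro h
    by_contra hc
    push_neg at hc
    have h0 : ∑ i, f i = 0 :=
      le_antisymm (Finset.sum_nonpos fun i _ => hc i) (Finset.sum_nonneg fun i _ => hf i)
    linarith
  · rintro ⟨i, hi⟩
    exact Finset.sum_pos' (fun j _ => hf j) ⟨i, Finset.mem_univ i, hi⟩

lemma key_parity {d : ℕ} (v : Fin (d+1) → ℤ) (t : ℕ) :
    (norm1 v ≤ (t:ℤ) + 1 ∧ Even ((t:ℤ) + 1 - norm1 v)) ↔
    ∃ i, (norm1 (Function.update v i (v i - 1)) ≤ (t:ℤ) ∧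
            Even ((t:ℤ) - norm1 (Function.update v i (v i - 1)))) ∨
         (norm1 (Function.update v i (v i + 1)) ≤ (t:ℤ) ∧
            Even ((t:ℤ) - norm1 (Function.update v i (v i + 1)))) := by
  constructor
  · rintro ⟨h1, h2⟩
    by_cases hv : v = 0
    · subst hv
      refine ⟨0, Or.inl ?_⟩
      rw [norm1_zero] at h1 h2
      rw [norm1_update, norm1_zero]
      norm_num
      simp only [Int.even_iff, Nat.even_iff, Nat.odd_iff] at *
      constructor <;> omega
    · have : ∃ i, v i ≠ 0 := by
        by_contra hc
        push_neg at hc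
        exact hv (funext fun i => hc i)
      obtain ⟨i, hi⟩ := this
      have hle := abs_le_norm1 v i
      rcases lt_or_gt_of_ne hi with h | h
      · refine ⟨i, Or.inr ?_⟩
        rw [norm1_update]
        have ha : |v i + 1| = |v i| - 1 := by
          rw [abs_of_neg h, abs_of_nonpos (by omega)]; ring
        rw [ha]
        simp only [Int.even_iff] at *
        constructor <;> omega
      · refine ⟨i, Or.inl ?_⟩
        rw [norm1_update]
        have ha : |v i - 1| = |v i| - 1 := by
          rw [abs_of_pos h, abs_of_nonneg (by omega)]
        rw [ha]
        simp only [Int.even_iff] at *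
        constructor <;> omega
  · rintro ⟨i, h | h⟩ <;>
    · rw [norm1_update] at h
      obtain ⟨h1, h2⟩ := h
      have hle := abs_le_norm1 v i
      have hn := norm1_nonneg v
      simp only [Int.abs_eq_natAbs, Int.even_iff] at *
      constructor <;> omega

lemma pos_iff {d : ℕ} {P : ℕ → (Fin (d + 1) → ℤ) → (Fin (d + 1) → ℤ) → ℝ}
    (hP : IsRandomWalk d P) (t : ℕ) (x z : Fin (d+1) → ℤ) :
    0 < P t x z ↔ (norm1 (z - x) ≤ (t:ℤ) ∧ Even ((t:ℤ) - norm1 (z - x))) := by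
  induction t generalizing x with
  | zero =>
    rw [hP.init]
    split
    · next h =>
      subst h
      simp [sub_self, norm1_zero]
    · next h =>
      simp only [lt_self_iff_false, false_iff, not_and]
      intro h1 h2
      have hn := norm1_nonneg (z - x)
      have h0 : norm1 (z - x) = 0 := by omega
      exact h (by have := norm1_eq_zero h0; rw [sub_eq_zero] at this; exact this)
  | succ t ih =>
    rw [hP.step]
    have hterm : ∀ i, (0 < P 1 x (x + unitVec d i) * P t (x + unitVec d i) z ↔
        0 < P t (x + unitVec d i) z) := fun i =>
      mul_pos_iff_of_pos_left (hP.pos_add x i)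
    have hterm' : ∀ i, (0 < P 1 x (x - unitVec d i) * P t (x - unitVec d i) z ↔
        0 < P t (x - unitVec d i) z) := fun i =>
      mul_pos_iff_of_pos_left (hP.pos_sub x i)
    have hnn1 : ∀ i : Fin (d+1), 0 ≤ P 1 x (x + unitVec d i) * P t (x + unitVec d i) z :=
      fun i => mul_nonneg (hP.nonneg _ _ _) (hP.nonneg _ _ _)
    have hnn2 : ∀ i : Fin (d+1), 0 ≤ P 1 x (x - unitVec d i) * P t (x - unitVec d i) z :=
      fun i => mul_nonneg (hP.nonneg _ _ _) (hP.nonneg _ _ _)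
    have hiff : 0 < (∑ i, P 1 x (x + unitVec d i) * P t (x + unitVec d i) z)
        + ∑ i, P 1 x (x - unitVec d i) * P t (x - unitVec d i) z ↔
        (∃ i, 0 < P t (x + unitVec d i) z) ∨ ∃ i, 0 < P t (x - unitVec d i) z := by
      have hs1 : 0 ≤ ∑ i, P 1 x (x + unitVec d i) * P t (x + unitVec d i) z :=
        Finset.sum_nonneg fun i _ => hnn1 i
      have hs2 : 0 ≤ ∑ i, P 1 x (x - unitVec d i) * P t (x - unitVec d i) z :=
        Finset.sum_nonneg fun i _ => hnn2 i
      constructor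
      · intro h
        rcases lt_or_eq_of_le hs1 with h1 | h1
        · exact Or.inl (((sum_pos_iff' hnn1).mp h1).imp fun i => (hterm i).mp)
        · refine Or.inr (((sum_pos_iff' hnn2).mp (by linarith)).imp fun i => (hterm' i).mp)
      · rintro (⟨i, hi⟩ | ⟨i, hi⟩)
        · have := (sum_pos_iff' hnn1).mpr ⟨i, (hterm i).mpr hi⟩; linarith
        · have := (sum_pos_iff' hnn2).mpr ⟨i, (hterm' i).mpr hi⟩; linarith
    rw [hiff]
    push_cast
    rw [key_parity (z - x) t]
    constructor
    · rintro (⟨i, hi⟩ | ⟨i, hi⟩)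
      · rw [ih] at hi
        refine ⟨i, Or.inl ?_⟩
        have : z - (x + unitVec d i) = Function.update (z - x) i ((z - x) i - 1) := by
          rw [show z - (x + unitVec d i) = (z - x) - Pi.single i 1 by unfold unitVec; ring,
            vec_sub_single]
        rwa [this] at hi
      · rw [ih] at hi
        refine ⟨i, Or.inr ?_⟩
        have : z - (x - unitVec d i) = Function.update (z - x) i ((z - x) i + 1) := by
          rw [show z - (x - unitVec d i) = (z - x) + Pi.single i 1 by unfold unitVec; ring,
            vec_add_single]
        rwa [this] at hi
    · rintro ⟨i, hi | hi⟩
      · refine Or.inl ⟨i, ?_⟩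
        rw [ih]
        have : z - (x + unitVec d i) = Function.update (z - x) i ((z - x) i - 1) := by
          rw [show z - (x + unitVec d i) = (z - x) - Pi.single i 1 by unfold unitVec; ring,
            vec_sub_single]
        rwa [this]
      · refine Or.inr ⟨i, ?_⟩
        rw [ih]
        have : z - (x - unitVec d i) = Function.update (z - x) i ((z - x) i + 1) := by
          rw [show z - (x - unitVec d i) = (z - x) + Pi.single i 1 by unfold unitVec; ring,
            vec_add_single]
        rwa [this]

lemma mem_Sset_iff {d t : ℕ} {x : Fin (d+1) → ℤ} {p : ℕ × (Fin (d+1) → ℤ)} :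
    p ∈ Sset d t x ↔ 1 ≤ p.1 ∧ p.2 (Fin.last d) = 0 ∧
      norm1 (p.2 - x) ≤ (t:ℤ) - p.1 ∧ Even ((t:ℤ) - p.1 - norm1 (p.2 - x)) := by
  unfold Sset
  simp only [Finset.mem_filter, Finset.mem_product, Fintype.mem_piFinset, Finset.mem_Icc]
  constructor
  · rintro ⟨⟨⟨h1, _⟩, _⟩, h4, h5, h6⟩
    exact ⟨h1, h4, h5, h6⟩
  · rintro ⟨h1, h2, h3, h4⟩
    have hn := norm1_nonneg (p.2 - x)
    refine ⟨⟨⟨h1, by omega⟩, fun i => ?_⟩, h2, h3, h4⟩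
    have hi := abs_le_norm1 (p.2 - x) i
    simp only [Pi.sub_apply] at hi
    have := abs_le.mp (le_trans hi (by omega : norm1 (p.2 - x) ≤ (t:ℤ)))
    omega

lemma prod_pos_iff' {α : Type*} [Fintype α] {f : α → ℝ} (hf : ∀ i, 0 ≤ f i) :
    0 < ∏ i, f i ↔ ∀ i, 0 < f i := by
  constructor
  · intro h i
    rcases lt_or_eq_of_le (hf i) with h' | h'
    · exact h'
    · rw [← Finset.prod_eq_zero (Finset.mem_univ i) h'.symm] at h
      exact absurd h (lt_irrefl _)
  · intro h
    exact Finset.prod_pos fun i _ => h i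


/-- the four conditions (i) `∏ P(Z^y_s = σ₂(s,y) + σ₁(s,y) e_d) > 0`,
(ii) `∏ P(Z^y_s = σ₂(s,y) − σ₁(s,y) e_d) > 0`, (iii) `σ(s,y) ∈ S(s,y)` for all `(s,y) ∈ A`,
(iv) `σ = id`, are equivalent. -/
theorem stmt_5 (d : ℕ) (P : ℕ → (Fin (d + 1) → ℤ) → (Fin (d + 1) → ℤ) → ℝ)
    (hP : IsRandomWalk d P) (A : Finset (ℕ × (Fin (d + 1) → ℤ)))
    (hA : ∀ p ∈ A, 1 ≤ p.1 ∧ p.2 (Fin.last d) = 0)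
    (σ : Equiv.Perm {p // p ∈ A}) :
    ((0 < ∏ p : {p // p ∈ A},
        P p.1.1 p.1.2 ((σ p).1.2 + Pi.single (Fin.last d) (((σ p).1.1 : ℤ)))) ↔ σ = 1) ∧
    ((0 < ∏ p : {p // p ∈ A},
        P p.1.1 p.1.2 ((σ p).1.2 - Pi.single (Fin.last d) (((σ p).1.1 : ℤ)))) ↔ σ = 1) ∧
    ((∀ p : {p // p ∈ A}, (σ p).1 ∈ Sset d p.1.1 p.1.2) ↔ σ = 1) := by
  -- pointwise iff between positivity conditions and Sset membership
  have hC : ∀ p : {p // p ∈ A},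
      (0 < P p.1.1 p.1.2 ((σ p).1.2 + Pi.single (Fin.last d) (((σ p).1.1 : ℤ))) ↔
        (σ p).1 ∈ Sset d p.1.1 p.1.2) ∧
      (0 < P p.1.1 p.1.2 ((σ p).1.2 - Pi.single (Fin.last d) (((σ p).1.1 : ℤ))) ↔
        (σ p).1 ∈ Sset d p.1.1 p.1.2) := by
    intro p
    obtain ⟨hs, hy⟩ := hA p.1 p.2
    obtain ⟨hu, hz⟩ := hA (σ p).1 (σ p).2
    have hv : ((σ p).1.2 - p.1.2) (Fin.last d) = 0 := by
      simp [Pi.sub_apply, hz, hy]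
    have e1 : (σ p).1.2 + Pi.single (Fin.last d) (((σ p).1.1 : ℤ)) - p.1.2 =
        Function.update ((σ p).1.2 - p.1.2) (Fin.last d) ((σ p).1.1 : ℤ) := by
      rw [show (σ p).1.2 + Pi.single (Fin.last d) (((σ p).1.1 : ℤ)) - p.1.2 =
        ((σ p).1.2 - p.1.2) + Pi.single (Fin.last d) (((σ p).1.1 : ℤ)) by ring,
        vec_add_single, hv, zero_add]
    have e2 : (σ p).1.2 - Pi.single (Fin.last d) (((σ p).1.1 : ℤ)) - p.1.2 =
        Function.update ((σ p).1.2 - p.1.2) (Fin.last d) (-((σ p).1.1 : ℤ)) := by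
      rw [show (σ p).1.2 - Pi.single (Fin.last d) (((σ p).1.1 : ℤ)) - p.1.2 =
        ((σ p).1.2 - p.1.2) - Pi.single (Fin.last d) (((σ p).1.1 : ℤ)) by ring,
        vec_sub_single, hv, zero_sub]
    have n1 : norm1 (Function.update ((σ p).1.2 - p.1.2) (Fin.last d) ((σ p).1.1 : ℤ)) =
        norm1 ((σ p).1.2 - p.1.2) + ((σ p).1.1 : ℤ) := by
      rw [norm1_update, hv, abs_zero, Int.abs_natCast]; ring
    have n2 : norm1 (Function.update ((σ p).1.2 - p.1.2) (Fin.last d) (-((σ p).1.1 : ℤ))) =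
        norm1 ((σ p).1.2 - p.1.2) + ((σ p).1.1 : ℤ) := by
      rw [norm1_update, hv, abs_zero, abs_neg, Int.abs_natCast]; ring
    have hn := norm1_nonneg ((σ p).1.2 - p.1.2)
    rw [pos_iff hP, pos_iff hP, e1, e2, n1, n2, mem_Sset_iff]
    simp only [hz, hu, true_and, Int.even_iff]
    constructor <;> constructor <;> (rintro ⟨h1, h2⟩; constructor <;> omega)
  -- Sset condition iff identity
  have hSid : (∀ p : {p // p ∈ A}, (σ p).1 ∈ Sset d p.1.1 p.1.2) ↔ σ = 1 := by
    constructor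
    · intro h
      have hle : ∀ p : {p // p ∈ A}, (σ p).1.1 ≤ p.1.1 := by
        intro p
        obtain ⟨_, _, h3, _⟩ := mem_Sset_iff.mp (h p)
        have hn := norm1_nonneg ((σ p).1.2 - p.1.2)
        omega
      have hsum : ∑ p : {p // p ∈ A}, (σ p).1.1 = ∑ p : {p // p ∈ A}, p.1.1 :=
        Equiv.sum_comp σ (fun p => p.1.1)
      have heq : ∀ p : {p // p ∈ A}, (σ p).1.1 = p.1.1 := by
        intro p
        have := (Finset.sum_eq_sum_iff_of_le (fun i _ => hle i)).mp hsum p (Finset.mem_univ p)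
        exact this
      ext p : 1
      obtain ⟨_, _, h3, _⟩ := mem_Sset_iff.mp (h p)
      have hn := norm1_nonneg ((σ p).1.2 - p.1.2)
      have h0 : norm1 ((σ p).1.2 - p.1.2) = 0 := by
        have := heq p; omega
      have hz : (σ p).1.2 = p.1.2 := by
        have := norm1_eq_zero h0; rwa [sub_eq_zero] at this
      simp only [Equiv.Perm.one_apply]
      exact Subtype.ext (Prod.ext (heq p) hz)
    · intro h
      subst h
      intro p
      obtain ⟨hs, hy⟩ := hA p.1 p.2
      simp only [Equiv.Perm.one_apply]
      rw [mem_Sset_iff]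
      refine ⟨hs, hy, ?_, ?_⟩ <;> simp [sub_self, norm1_zero]
  refine ⟨?_, ?_, hSid⟩
  · rw [prod_pos_iff' (fun p => hP.nonneg _ _ _), ← hSid]
    exact forall_congr' fun p => (hC p).1
  · rw [prod_pos_iff' (fun p => hP.nonneg _ _ _), ← hSid]
    exact forall_congr' fun p => (hC p).2
end
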